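/- Under the weighted stochastic block model, the path-graph moment matrix factors multilinearly: for any four distinct nodes 1, 2, 3, 4 and all indices l_1, l_2 ∈ {1,…,l}, E(α_{l_1}(X_{1,2}) φ(X_{1,3}) α_{l_2}(X_{3,4})) = (G H_φ Gᵀ)_{l_1,l_2}, where (H_φ)_{z_1,z_2} := p_{z_1} p_{z_2} φ_{z_1,z_2} and φ_{z_1,z_2} := E(φ(X_{i,j}) | Z_i = z_1, Z_j = z_2). -/

import Mathlib

open MeasureTheory

/-- The weighted stochastic block model on `n` nodes with `r` latent communities:
community labels `Z i` are i.i.d. with distribution `p`; edge weights `X i j = X j i`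
are, conditionally on the labels, mutually independent with conditional CDF
`F (Z i) (Z j)` (encoded through the joint conditional CDF factorization `X_cond`). -/
structure SBM (Ω : Type) [MeasurableSpace Ω] (ℙ : Measure Ω) (n r : ℕ) where
  /-- the community distribution -/
  p : Fin r → ℝ
  /-- the community labels -/
  Z : Fin n → Ω → Fin r
  /-- the edge weights -/
  X : Fin n → Fin n → Ω → ℝ
  /-- the conditional CDFs -/
  F : Fin r → Fin r → ℝ → ℝ
  prob : IsProbabilityMeasure ℙ
  p_pos : ∀ z, 0 < p z
  p_sum : ∑ z, p z = 1
  Z_meas : ∀ i, Measurable (Z i)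
  X_meas : ∀ i j, Measurable (X i j)
  X_symm : ∀ i j, X i j = X j i
  F_symm : ∀ z₁ z₂, F z₁ z₂ = F z₂ z₁
  /-- the labels are i.i.d. with distribution `p` -/
  Z_iid : ∀ z : Fin n → Fin r,
    ℙ {ω | ∀ i, Z i ω = z i} = ENNReal.ofReal (∏ i, p (z i))
  /-- conditionally on the labels, the edge weights are mutually independent and the
  conditional CDF of `X i j` given `Z i = z i`, `Z j = z j` is `F (z i) (z j)` -/
  X_cond : ∀ (z : Fin n → Fin r) (S : Finset (Fin n × Fin n)),
    (∀ q ∈ S, q.1 < q.2) → ∀ x : Fin n × Fin n → ℝ,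
      ℙ ({ω | ∀ q ∈ S, X q.1 q.2 ω ≤ x q} ∩ {ω | ∀ i, Z i ω = z i})
        = ENNReal.ofReal ((∏ q ∈ S, F (z q.1) (z q.2) (x q)) * ∏ i, p (z i))

namespace SBMAux
open MeasureTheory Set

variable {Ω : Type} [MeasurableSpace Ω] {ℙ : Measure Ω} {n r : ℕ}

/-- ordered version of a pair -/
def op {n : ℕ} (i j : Fin n) : Fin n × Fin n := if i < j then (i, j) else (j, i)

lemma op_mem {n : ℕ} (i j : Fin n) : op i j = (i, j) ∨ op i j = (j, i) := by
  unfold op; split_ifs <;> simp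

lemma op_lt {n : ℕ} {i j : Fin n} (h : i ≠ j) : (op i j).1 < (op i j).2 := by
  unfold op; split_ifs with hlt
  · exact hlt
  · exact lt_of_le_of_ne (not_lt.mp hlt) h.symm

lemma X_op (sbm : SBM Ω ℙ n r) (i j : Fin n) :
    sbm.X (op i j).1 (op i j).2 = sbm.X i j := by
  rcases op_mem i j with h | h <;> rw [h]
  exact sbm.X_symm j i

lemma F_op (sbm : SBM Ω ℙ n r) (z : Fin n → Fin r) (i j : Fin n) :
    sbm.F (z (op i j).1) (z (op i j).2) = sbm.F (z i) (z j) := by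
  rcases op_mem i j with h | h <;> rw [h]
  exact sbm.F_symm (z j) (z i)

lemma op_ne {n : ℕ} {i j k l : Fin n} (w : (i ≠ k ∧ i ≠ l) ∨ (j ≠ k ∧ j ≠ l)) :
    op i j ≠ op k l := by
  intro h
  rcases op_mem i j with h1 | h1 <;> rcases op_mem k l with h2 | h2 <;>
    rw [h1, h2, Prod.ext_iff] at h <;>
    rcases h with ⟨ha, hb⟩ <;> rcases w with ⟨w1, w2⟩ | ⟨w1, w2⟩ <;> simp_all

/-- the atom of the label partition -/
def Az (sbm : SBM Ω ℙ n r) (z : Fin n → Fin r) : Set Ω := {ω | ∀ i, sbm.Z i ω = z i}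

/-- probability weight of a full label vector -/
def Pz (sbm : SBM Ω ℙ n r) (z : Fin n → Fin r) : ℝ := ∏ i, sbm.p (z i)

/-- the event that two labels take given values -/
def Bset (sbm : SBM Ω ℙ n r) (i j : Fin n) (z₁ z₂ : Fin r) : Set Ω :=
  {ω | sbm.Z i ω = z₁ ∧ sbm.Z j ω = z₂}

lemma Pz_pos (sbm : SBM Ω ℙ n r) (z : Fin n → Fin r) : 0 < Pz sbm z :=
  Finset.prod_pos fun _ _ => sbm.p_pos _

lemma Az_meas (sbm : SBM Ω ℙ n r) (z : Fin n → Fin r) : MeasurableSet (Az sbm z) := by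
  have : Az sbm z = ⋂ i, (sbm.Z i) ⁻¹' {z i} := by ext ω; simp [Az]
  rw [this]
  exact MeasurableSet.iInter fun i => (sbm.Z_meas i) (measurableSet_singleton _)

lemma Bset_meas (sbm : SBM Ω ℙ n r) (i j : Fin n) (z₁ z₂ : Fin r) :
    MeasurableSet (Bset sbm i j z₁ z₂) := by
  have : Bset sbm i j z₁ z₂ = (sbm.Z i) ⁻¹' {z₁} ∩ (sbm.Z j) ⁻¹' {z₂} := by
    ext ω; simp [Bset]
  rw [this]
  exact ((sbm.Z_meas i) (measurableSet_singleton _)).inter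
    ((sbm.Z_meas j) (measurableSet_singleton _))

lemma measure_Az (sbm : SBM Ω ℙ n r) (z : Fin n → Fin r) :
    ℙ (Az sbm z) = ENNReal.ofReal (Pz sbm z) := sbm.Z_iid z

lemma Az_disjoint (sbm : SBM Ω ℙ n r) :
    Set.PairwiseDisjoint (↑(Finset.univ : Finset (Fin n → Fin r))) (Az sbm) := by
  intro z _ z' _ hne
  refine Set.disjoint_left.2 fun ω hω hω' => hne ?_
  exact funext fun i => (hω i).symm.trans (hω' i)

lemma measure_partition (sbm : SBM Ω ℙ n r) (C : Set Ω) (hC : MeasurableSet C) :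
    ℙ C = ∑ z : Fin n → Fin r, ℙ (C ∩ Az sbm z) := by
  have hcov : C = ⋃ z ∈ (Finset.univ : Finset (Fin n → Fin r)), C ∩ Az sbm z := by
    ext ω
    simp only [Set.mem_iUnion, Finset.mem_univ, iUnion_true, Set.mem_inter_iff]
    constructor
    · intro h; exact ⟨fun i => sbm.Z i ω, h, fun i => rfl⟩
    · rintro ⟨z, hz, -⟩; exact hz
  have hd : Set.PairwiseDisjoint (↑(Finset.univ : Finset (Fin n → Fin r)))
      (fun z => C ∩ Az sbm z) :=
    (Az_disjoint sbm).mono_on fun z _ => Set.inter_subset_right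
  have hm : ∀ z ∈ (Finset.univ : Finset (Fin n → Fin r)), MeasurableSet (C ∩ Az sbm z) :=
    fun z _ => hC.inter (Az_meas sbm z)
  have := measure_biUnion_finset (μ := ℙ) hd hm
  rw [← hcov] at this
  exact this

lemma integral_partition (sbm : SBM Ω ℙ n r) (f : Ω → ℝ) (hf : Integrable f ℙ) :
    ∫ ω, f ω ∂ℙ = ∑ z : Fin n → Fin r, ∫ ω in Az sbm z, f ω ∂ℙ := by
  have hcov : (Set.univ : Set Ω) = ⋃ z ∈ (Finset.univ : Finset (Fin n → Fin r)), Az sbm z := by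
    ext ω
    simp only [Set.mem_univ, true_iff, Set.mem_iUnion, Finset.mem_univ, iUnion_true]
    exact ⟨fun i => sbm.Z i ω, fun i => rfl⟩
  rw [← setIntegral_univ, hcov, integral_biUnion_finset]
  · exact fun z _ => Az_meas sbm z
  · exact Az_disjoint sbm
  · exact fun z _ => hf.integrableOn

end SBMAux

-- chunk 2 appended to aux1 for testing
section
open Finset in
lemma sum_prod_p_filter {n r : ℕ} {Ω : Type} [MeasurableSpace Ω] {ℙ : MeasureTheory.Measure Ω}
    (sbm : SBM Ω ℙ n r) (s : Finset (Fin n)) (q : Fin n → Fin r) :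
    ∑ z : Fin n → Fin r, (if ∀ i ∈ s, z i = q i then ∏ i, sbm.p (z i) else 0)
      = ∏ i ∈ s, sbm.p (q i) := by
  classical
  have key : ∀ z : Fin n → Fin r,
      (if ∀ i ∈ s, z i = q i then ∏ i, sbm.p (z i) else 0)
        = ∏ j, (if j ∈ s then (if z j = q j then sbm.p (z j) else 0) else sbm.p (z j)) := by
    intro z
    split_ifs with hz
    · refine Finset.prod_congr rfl fun j _ => ?_
      by_cases hj : j ∈ s
      · simp [hj, hz j hj]
      · simp [hj]
    · push_neg at hz
      obtain ⟨i, hi, hne⟩ := hz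
      refine (Finset.prod_eq_zero (Finset.mem_univ i) ?_).symm
      simp [hi, hne]
  simp_rw [key]
  have := Finset.prod_univ_sum (fun _ : Fin n => (Finset.univ : Finset (Fin r)))
    (fun j y => (if j ∈ s then (if y = q j then sbm.p y else 0) else sbm.p y))
  rw [Fintype.piFinset_univ] at this
  rw [← this]
  have : ∀ j : Fin n, (∑ y : Fin r, (if j ∈ s then (if y = q j then sbm.p y else 0) else sbm.p y))
      = (if j ∈ s then sbm.p (q j) else 1) := by
    intro j
    by_cases hj : j ∈ s
    · simp [hj, Finset.sum_ite_eq' Finset.univ (q j) (fun y => sbm.p y)]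
    · simp [hj, sbm.p_sum]
  simp_rw [this]
  rw [Finset.prod_ite_mem Finset.univ s (fun j => sbm.p (q j)), Finset.univ_inter]
end

namespace SBMAux

variable {Ω : Type} [MeasurableSpace Ω] {ℙ : MeasureTheory.Measure Ω} {n r : ℕ}

open MeasureTheory Set

lemma sum_ite_two (sbm : SBM Ω ℙ n r) {i j : Fin n} (hij : i ≠ j) (z₁ z₂ : Fin r) :
    ∑ z : Fin n → Fin r, (if z i = z₁ ∧ z j = z₂ then ENNReal.ofReal (Pz sbm z) else 0)
      = ENNReal.ofReal (sbm.p z₁ * sbm.p z₂) := by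
  classical
  have h1 : ∀ z : Fin n → Fin r,
      (if z i = z₁ ∧ z j = z₂ then ENNReal.ofReal (Pz sbm z) else 0)
        = ENNReal.ofReal (if z i = z₁ ∧ z j = z₂ then Pz sbm z else 0) := by
    intro z; split_ifs <;> simp
  simp_rw [h1]
  rw [← ENNReal.ofReal_sum_of_nonneg]
  · congr 1
    have := sum_prod_p_filter sbm {i, j} (fun k => if k = i then z₁ else z₂)
    have hcond : ∀ z : Fin n → Fin r,
        (∀ k ∈ ({i, j} : Finset (Fin n)), z k = (if k = i then z₁ else z₂))
          ↔ (z i = z₁ ∧ z j = z₂) := by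
      intro z
      simp [Finset.mem_insert, hij.symm]
    calc ∑ z : Fin n → Fin r, (if z i = z₁ ∧ z j = z₂ then Pz sbm z else 0)
        = ∑ z : Fin n → Fin r,
            (if ∀ k ∈ ({i, j} : Finset (Fin n)), z k = (if k = i then z₁ else z₂)
              then ∏ k, sbm.p (z k) else 0) := by
          refine Finset.sum_congr rfl fun z _ => ?_
          rw [Pz]
          exact (if_congr (hcond z) rfl rfl).symm
      _ = ∏ k ∈ ({i, j} : Finset (Fin n)), sbm.p (if k = i then z₁ else z₂) := this
      _ = sbm.p z₁ * sbm.p z₂ := by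
          rw [Finset.prod_pair hij]
          simp [hij.symm]
  · intro z _
    split_ifs
    · exact (Pz_pos sbm z).le
    · exact le_rfl
end SBMAux

namespace SBMAux
variable {Ω : Type} [MeasurableSpace Ω] {ℙ : MeasureTheory.Measure Ω} {n r : ℕ}
open MeasureTheory Set

lemma Az_def (sbm : SBM Ω ℙ n r) (z : Fin n → Fin r) :
    Az sbm z = {ω | ∀ i, sbm.Z i ω = z i} := rfl

lemma Pz_def (sbm : SBM Ω ℙ n r) (z : Fin n → Fin r) :
    Pz sbm z = ∏ i, sbm.p (z i) := rfl

lemma Binter_Az (sbm : SBM Ω ℙ n r) {i j : Fin n} (z₁ z₂ : Fin r) (z : Fin n → Fin r) :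
    ℙ (Bset sbm i j z₁ z₂ ∩ Az sbm z)
      = (if z i = z₁ ∧ z j = z₂ then ℙ (Az sbm z) else 0) := by
  split_ifs with hcomp
  · congr 1
    refine Set.inter_eq_self_of_subset_right fun ω hω => ?_
    exact ⟨(hω i).trans hcomp.1, (hω j).trans hcomp.2⟩
  · convert measure_empty
    · refine Set.eq_empty_iff_forall_notMem.2 fun ω hω => hcomp ?_
      exact ⟨(hω.2 i).symm.trans hω.1.1, (hω.2 j).symm.trans hω.1.2⟩
    · infer_instance

lemma measure_B (sbm : SBM Ω ℙ n r) {i j : Fin n} (hij : i ≠ j) (z₁ z₂ : Fin r) :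
    ℙ (Bset sbm i j z₁ z₂) = ENNReal.ofReal (sbm.p z₁ * sbm.p z₂) := by
  rw [measure_partition sbm _ (Bset_meas sbm i j z₁ z₂)]
  rw [← sum_ite_two sbm hij z₁ z₂]
  refine Finset.sum_congr rfl fun z _ => ?_
  rw [Binter_Az sbm z₁ z₂ z, measure_Az]

lemma measure_single (sbm : SBM Ω ℙ n r) (i : Fin n) (z₁ : Fin r) :
    ℙ {ω | sbm.Z i ω = z₁} = ENNReal.ofReal (sbm.p z₁) := by
  classical
  have hmeas : MeasurableSet {ω | sbm.Z i ω = z₁} := (sbm.Z_meas i) (measurableSet_singleton _)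
  rw [measure_partition sbm _ hmeas]
  have h1 : ∀ z : Fin n → Fin r, ℙ ({ω | sbm.Z i ω = z₁} ∩ Az sbm z)
      = ENNReal.ofReal (if z i = z₁ then Pz sbm z else 0) := by
    intro z
    split_ifs with hcomp
    · rw [← measure_Az sbm z]
      congr 1
      exact Set.inter_eq_self_of_subset_right fun ω hω => (hω i).trans hcomp
    · have he : {ω | sbm.Z i ω = z₁} ∩ Az sbm z = ∅ :=
        Set.eq_empty_iff_forall_notMem.2 fun ω hω => hcomp ((hω.2 i).symm.trans hω.1)
      rw [he]
      simp
  simp_rw [h1]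
  rw [← ENNReal.ofReal_sum_of_nonneg]
  · congr 1
    have := sum_prod_p_filter sbm {i} (fun _ => z₁)
    simp only [Finset.mem_singleton, forall_eq, Finset.prod_singleton] at this
    rw [← this]
    rfl
  · intro z _
    split_ifs
    · exact (Pz_pos sbm z).le
    · exact le_rfl

/-- truncated conditional CDF -/
def Fp (sbm : SBM Ω ℙ n r) (z₁ z₂ : Fin r) (a : ℝ) : ℝ := max (sbm.F z₁ z₂ a) 0

lemma Fp_nonneg (sbm : SBM Ω ℙ n r) (z₁ z₂ : Fin r) (a : ℝ) : 0 ≤ Fp sbm z₁ z₂ a :=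
  le_max_right _ _

lemma single_cdf (sbm : SBM Ω ℙ n r) {i j : Fin n} (hij : i ≠ j) (z : Fin n → Fin r) (a : ℝ) :
    ℙ ({ω | sbm.X i j ω ≤ a} ∩ Az sbm z)
      = ENNReal.ofReal (Fp sbm (z i) (z j) a) * ENNReal.ofReal (Pz sbm z) := by
  classical
  have h := sbm.X_cond z {op i j}
    (by
      intro q hq
      rw [Finset.mem_singleton] at hq
      subst hq
      exact op_lt hij)
    (fun _ => a)
  have hset : {ω | ∀ q ∈ ({op i j} : Finset (Fin n × Fin n)), sbm.X q.1 q.2 ω ≤ a}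
      = {ω | sbm.X i j ω ≤ a} := by
    ext ω
    simp only [Finset.mem_singleton, Set.mem_setOf_eq, forall_eq]
    rw [X_op sbm i j]
  rw [hset, Finset.prod_singleton, F_op sbm z i j, ← Az_def sbm z, ← Pz_def sbm z] at h
  rw [h]
  rcases le_or_gt 0 (sbm.F (z i) (z j) a) with hF | hF
  · rw [Fp, max_eq_left hF, ENNReal.ofReal_mul hF]
  · rw [Fp, max_eq_right hF.le]
    rw [ENNReal.ofReal_of_nonpos (mul_nonpos_iff.2 (Or.inr ⟨hF.le, (Pz_pos sbm z).le⟩))]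
    simp

lemma B_cdf (sbm : SBM Ω ℙ n r) {i j : Fin n} (hij : i ≠ j) (z₁ z₂ : Fin r) (a : ℝ) :
    ℙ ({ω | sbm.X i j ω ≤ a} ∩ Bset sbm i j z₁ z₂)
      = ENNReal.ofReal (Fp sbm z₁ z₂ a) * ENNReal.ofReal (sbm.p z₁ * sbm.p z₂) := by
  classical
  have hXm : MeasurableSet {ω | sbm.X i j ω ≤ a} := (sbm.X_meas i j) measurableSet_Iic
  rw [measure_partition sbm _ (hXm.inter (Bset_meas sbm i j z₁ z₂))]
  have h1 : ∀ z : Fin n → Fin r,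
      ℙ ({ω | sbm.X i j ω ≤ a} ∩ Bset sbm i j z₁ z₂ ∩ Az sbm z)
        = (if z i = z₁ ∧ z j = z₂
            then ENNReal.ofReal (Fp sbm z₁ z₂ a) * ENNReal.ofReal (Pz sbm z) else 0) := by
    intro z
    split_ifs with hcomp
    · rw [← hcomp.1, ← hcomp.2, ← single_cdf sbm hij z a]
      congr 1
      rw [Set.inter_assoc]
      congr 1
      exact Set.inter_eq_self_of_subset_right fun ω hω => ⟨hω i, hω j⟩
    · have he : {ω | sbm.X i j ω ≤ a} ∩ Bset sbm i j z₁ z₂ ∩ Az sbm z = ∅ :=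
        Set.eq_empty_iff_forall_notMem.2 fun ω hω => hcomp
          ⟨(hω.2 i).symm.trans hω.1.2.1, (hω.2 j).symm.trans hω.1.2.2⟩
      rw [he]
      simp
  simp_rw [h1]
  have h2 : ∀ z : Fin n → Fin r,
      (if z i = z₁ ∧ z j = z₂
          then ENNReal.ofReal (Fp sbm z₁ z₂ a) * ENNReal.ofReal (Pz sbm z) else 0)
        = ENNReal.ofReal (Fp sbm z₁ z₂ a)
            * (if z i = z₁ ∧ z j = z₂ then ENNReal.ofReal (Pz sbm z) else 0) := by
    intro z; split_ifs <;> simp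
  simp_rw [h2, ← Finset.mul_sum, sum_ite_two sbm hij z₁ z₂]

end SBMAux

namespace SBMAux
variable {Ω : Type} [MeasurableSpace Ω] {ℙ : MeasureTheory.Measure Ω} {n r : ℕ}
open MeasureTheory Set

lemma triple_cdf (sbm : SBM Ω ℙ n r) {i₁ i₂ i₃ i₄ : Fin n}
    (h12 : i₁ ≠ i₂) (h13 : i₁ ≠ i₃) (h14 : i₁ ≠ i₄)
    (h23 : i₂ ≠ i₃) (h24 : i₂ ≠ i₄) (h34 : i₃ ≠ i₄)
    (z : Fin n → Fin r) (a b c : ℝ) :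
    ℙ ({ω | sbm.X i₁ i₂ ω ≤ a ∧ sbm.X i₁ i₃ ω ≤ b ∧ sbm.X i₃ i₄ ω ≤ c} ∩ Az sbm z)
      = ENNReal.ofReal (Fp sbm (z i₁) (z i₂) a) * ENNReal.ofReal (Fp sbm (z i₁) (z i₃) b)
        * ENNReal.ofReal (Fp sbm (z i₃) (z i₄) c) * ENNReal.ofReal (Pz sbm z) := by
  classical
  -- the three ordered pairs
  set q1 := op i₁ i₂ with hq1
  set q2 := op i₁ i₃ with hq2
  set q3 := op i₃ i₄ with hq3
  have hne12 : q1 ≠ q2 := op_ne (Or.inr ⟨h12.symm, h23⟩)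
  have hne13 : q1 ≠ q3 := op_ne (Or.inl ⟨h13, h14⟩)
  have hne23 : q2 ≠ q3 := op_ne (Or.inl ⟨h13, h14⟩)
  set S : Finset (Fin n × Fin n) := {q1, q2, q3} with hS
  have hSlt : ∀ q ∈ S, q.1 < q.2 := by
    intro q hq
    simp only [hS, Finset.mem_insert, Finset.mem_singleton] at hq
    rcases hq with rfl | rfl | rfl
    · exact op_lt h12
    · exact op_lt h13
    · exact op_lt h34
  set x : Fin n × Fin n → ℝ := fun q => if q = q1 then a else if q = q2 then b else c with hx
  have ex1 : x q1 = a := by simp [hx]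
  have ex2 : x q2 = b := by simp [hx, hne12.symm]
  have ex3 : x q3 = c := by simp [hx, hne13.symm, hne23.symm]
  have h := sbm.X_cond z S hSlt x
  have hset : {ω | ∀ q ∈ S, sbm.X q.1 q.2 ω ≤ x q}
      = {ω | sbm.X i₁ i₂ ω ≤ a ∧ sbm.X i₁ i₃ ω ≤ b ∧ sbm.X i₃ i₄ ω ≤ c} := by
    ext ω
    simp only [hS, Finset.mem_insert, Finset.mem_singleton, Set.mem_setOf_eq,
      forall_eq_or_imp, forall_eq]
    rw [ex1, ex2, ex3, hq1, hq2, hq3, X_op sbm i₁ i₂, X_op sbm i₁ i₃, X_op sbm i₃ i₄]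
  have hprod : (∏ q ∈ S, sbm.F (z q.1) (z q.2) (x q))
      = sbm.F (z i₁) (z i₂) a * (sbm.F (z i₁) (z i₃) b * sbm.F (z i₃) (z i₄) c) := by
    rw [hS, Finset.prod_insert (by simp [hne12, hne13]),
      Finset.prod_insert (by simp [hne23]), Finset.prod_singleton]
    rw [ex1, ex2, ex3, hq1, hq2, hq3, F_op sbm z i₁ i₂, F_op sbm z i₁ i₃, F_op sbm z i₃ i₄]
  rw [hset, hprod, ← Az_def sbm z, ← Pz_def sbm z] at h
  -- now case on signs
  have hsub12 : {ω | sbm.X i₁ i₂ ω ≤ a ∧ sbm.X i₁ i₃ ω ≤ b ∧ sbm.X i₃ i₄ ω ≤ c}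
      ⊆ {ω | sbm.X i₁ i₂ ω ≤ a} := fun ω hω => hω.1
  have hsub13 : {ω | sbm.X i₁ i₂ ω ≤ a ∧ sbm.X i₁ i₃ ω ≤ b ∧ sbm.X i₃ i₄ ω ≤ c}
      ⊆ {ω | sbm.X i₁ i₃ ω ≤ b} := fun ω hω => hω.2.1
  have hsub34 : {ω | sbm.X i₁ i₂ ω ≤ a ∧ sbm.X i₁ i₃ ω ≤ b ∧ sbm.X i₃ i₄ ω ≤ c}
      ⊆ {ω | sbm.X i₃ i₄ ω ≤ c} := fun ω hω => hω.2.2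
  have zero_case : ∀ (s : Set Ω),
      {ω | sbm.X i₁ i₂ ω ≤ a ∧ sbm.X i₁ i₃ ω ≤ b ∧ sbm.X i₃ i₄ ω ≤ c} ⊆ s →
      ℙ (s ∩ Az sbm z) = 0 →
      ℙ ({ω | sbm.X i₁ i₂ ω ≤ a ∧ sbm.X i₁ i₃ ω ≤ b ∧ sbm.X i₃ i₄ ω ≤ c} ∩ Az sbm z) = 0 :=
    fun s hsub hs => le_antisymm (hs ▸ measure_mono (Set.inter_subset_inter_left _ hsub))
      (zero_le)
  have hzero : ∀ (u v : Fin r) (t : ℝ), sbm.F u v t < 0 →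
      ENNReal.ofReal (Fp sbm u v t) = 0 := by
    intro u v t ht
    rw [Fp, max_eq_right ht.le]
    simp
  rcases le_or_gt 0 (sbm.F (z i₁) (z i₂) a) with hF1 | hF1
  · rcases le_or_gt 0 (sbm.F (z i₁) (z i₃) b) with hF2 | hF2
    · rcases le_or_gt 0 (sbm.F (z i₃) (z i₄) c) with hF3 | hF3
      · rw [h, Fp, Fp, Fp, max_eq_left hF1, max_eq_left hF2, max_eq_left hF3]
        rw [ENNReal.ofReal_mul (by positivity), ENNReal.ofReal_mul hF1,
          ENNReal.ofReal_mul hF2]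
        ring
      · rw [zero_case _ hsub34 (by
            rw [single_cdf sbm h34 z c, hzero _ _ _ hF3, zero_mul]),
          hzero _ _ _ hF3]
        ring
    · rw [zero_case _ hsub13 (by
          rw [single_cdf sbm h13 z b, hzero _ _ _ hF2, zero_mul]),
        hzero _ _ _ hF2]
      ring
  · rw [zero_case _ hsub12 (by
        rw [single_cdf sbm h12 z a, hzero _ _ _ hF1, zero_mul]),
      hzero _ _ _ hF1]
    ring

end SBMAux

namespace SBMAux
open MeasureTheory Set MeasurableSpace

lemma spanIic : IsCountablySpanning (Set.range (Set.Iic : ℝ → Set ℝ)) := by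
  refine ⟨fun k => Set.Iic (k : ℝ), fun k => ⟨k, rfl⟩, ?_⟩
  ext x
  simp only [Set.mem_iUnion, Set.mem_Iic, Set.mem_univ, iff_true]
  exact exists_nat_ge x

lemma genIic : (inferInstance : MeasurableSpace ℝ)
    = MeasurableSpace.generateFrom (Set.range (Set.Iic : ℝ → Set ℝ)) :=
  BorelSpace.measurable_eq.trans (borel_eq_generateFrom_Iic ℝ)

lemma genR2 : MeasurableSpace.generateFrom
      (Set.image2 (· ×ˢ ·) (Set.range (Set.Iic : ℝ → Set ℝ))
        (Set.range (Set.Iic : ℝ → Set ℝ)))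
    = (inferInstance : MeasurableSpace (ℝ × ℝ)) :=
  generateFrom_eq_prod genIic.symm genIic.symm spanIic spanIic

lemma spanR2 : IsCountablySpanning
    (Set.image2 (· ×ˢ ·) (Set.range (Set.Iic : ℝ → Set ℝ))
      (Set.range (Set.Iic : ℝ → Set ℝ))) :=
  spanIic.prod spanIic

lemma ext_R2 (μ ν : Measure (ℝ × ℝ)) [IsFiniteMeasure μ] [IsFiniteMeasure ν]
    (h : ∀ a b : ℝ, μ (Set.Iic a ×ˢ Set.Iic b) = ν (Set.Iic a ×ˢ Set.Iic b))
    (hu : μ Set.univ = ν Set.univ) : μ = ν := by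
  refine ext_of_generate_finite _ genR2.symm (isPiSystem_Iic.prod isPiSystem_Iic) ?_ hu
  rintro s ⟨s₁, ⟨a, rfl⟩, s₂, ⟨b, rfl⟩, rfl⟩
  exact h a b

lemma ext_R3 (μ ν : Measure (ℝ × ℝ × ℝ)) [IsFiniteMeasure μ] [IsFiniteMeasure ν]
    (h : ∀ a b c : ℝ, μ (Set.Iic a ×ˢ Set.Iic b ×ˢ Set.Iic c)
      = ν (Set.Iic a ×ˢ Set.Iic b ×ˢ Set.Iic c))
    (hu : μ Set.univ = ν Set.univ) : μ = ν := by
  have hgen3 : MeasurableSpace.generateFrom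
      (Set.image2 (· ×ˢ ·) (Set.range (Set.Iic : ℝ → Set ℝ))
        (Set.image2 (· ×ˢ ·) (Set.range (Set.Iic : ℝ → Set ℝ))
          (Set.range (Set.Iic : ℝ → Set ℝ))))
      = (inferInstance : MeasurableSpace (ℝ × ℝ × ℝ)) :=
    generateFrom_eq_prod genIic.symm genR2 spanIic spanR2
  refine ext_of_generate_finite _ hgen3.symm
    (isPiSystem_Iic.prod (isPiSystem_Iic.prod isPiSystem_Iic)) ?_ hu
  rintro s ⟨s₁, ⟨a, rfl⟩, s₂, ⟨t₁, ⟨b, rfl⟩, t₂, ⟨c, rfl⟩, rfl⟩, rfl⟩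
  exact h a b c

end SBMAux

namespace SBMAux
variable {Ω : Type} [MeasurableSpace Ω] {ℙ : MeasureTheory.Measure Ω} {n r : ℕ}
open MeasureTheory Set

lemma map_finite (sbm : SBM Ω ℙ n r) {β : Type*} [MeasurableSpace β] (s : Set Ω)
    {g : Ω → β} (hg : Measurable g) : IsFiniteMeasure ((ℙ.restrict s).map g) := by
  haveI := sbm.prob
  constructor
  rw [Measure.map_apply hg MeasurableSet.univ]
  exact measure_lt_top _ _

lemma smul_finite {β : Type*} [MeasurableSpace β] (μ : Measure β) [IsFiniteMeasure μ] (c : ℝ) :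
    IsFiniteMeasure (ENNReal.ofReal c • μ) := by
  constructor
  rw [Measure.smul_apply, smul_eq_mul]
  exact ENNReal.mul_lt_top ENNReal.ofReal_lt_top (measure_lt_top _ _)

lemma preimage_Iic (sbm : SBM Ω ℙ n r) (i j : Fin n) (a : ℝ) :
    (sbm.X i j) ⁻¹' (Set.Iic a) = {ω | sbm.X i j ω ≤ a} := rfl

lemma scaling (sbm : SBM Ω ℙ n r) {i j : Fin n} (hij : i ≠ j) (z : Fin n → Fin r)
    (f : ℝ → ℝ) (hf : Measurable f) :
    (sbm.p (z i) * sbm.p (z j)) * ∫ ω in Az sbm z, f (sbm.X i j ω) ∂ℙ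
      = Pz sbm z * ∫ ω in Bset sbm i j (z i) (z j), f (sbm.X i j ω) ∂ℙ := by
  haveI := sbm.prob
  set μ1 := (ℙ.restrict (Az sbm z)).map (sbm.X i j) with hμ1
  set κ := (ℙ.restrict (Bset sbm i j (z i) (z j))).map (sbm.X i j) with hκ
  haveI := map_finite sbm (Az sbm z) (sbm.X_meas i j)
  haveI := map_finite sbm (Bset sbm i j (z i) (z j)) (sbm.X_meas i j)
  haveI := smul_finite μ1 (sbm.p (z i) * sbm.p (z j))
  haveI := smul_finite κ (Pz sbm z)
  have hkey : (ENNReal.ofReal (sbm.p (z i) * sbm.p (z j))) • μ1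
      = (ENNReal.ofReal (Pz sbm z)) • κ := by
    apply Measure.ext_of_Iic
    intro a
    rw [Measure.smul_apply, Measure.smul_apply, smul_eq_mul, smul_eq_mul, hμ1, hκ,
      Measure.map_apply (sbm.X_meas i j) measurableSet_Iic,
      Measure.map_apply (sbm.X_meas i j) measurableSet_Iic,
      Measure.restrict_apply ((sbm.X_meas i j) measurableSet_Iic),
      Measure.restrict_apply ((sbm.X_meas i j) measurableSet_Iic),
      preimage_Iic, single_cdf sbm hij z a, B_cdf sbm hij (z i) (z j) a]
    ring
  have hI := congrArg (fun m => ∫ x, f x ∂m) hkey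
  simp only [integral_smul_measure] at hI
  rw [ENNReal.toReal_ofReal (mul_nonneg (sbm.p_pos (z i)).le (sbm.p_pos (z j)).le), ENNReal.toReal_ofReal (Pz_pos sbm z).le] at hI
  rw [hμ1, hκ, integral_map (sbm.X_meas i j).aemeasurable hf.aestronglyMeasurable,
    integral_map (sbm.X_meas i j).aemeasurable hf.aestronglyMeasurable] at hI
  simpa using hI

lemma factorization (sbm : SBM Ω ℙ n r) {i₁ i₂ i₃ i₄ : Fin n}
    (h12 : i₁ ≠ i₂) (h13 : i₁ ≠ i₃) (h14 : i₁ ≠ i₄)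
    (h23 : i₂ ≠ i₃) (h24 : i₂ ≠ i₄) (h34 : i₃ ≠ i₄)
    (z : Fin n → Fin r) (f g h : ℝ → ℝ)
    (hf : Measurable f) (hg : Measurable g) (hh : Measurable h) :
    Pz sbm z ^ 2 * ∫ ω in Az sbm z,
        f (sbm.X i₁ i₂ ω) * (g (sbm.X i₁ i₃ ω) * h (sbm.X i₃ i₄ ω)) ∂ℙ
      = (∫ ω in Az sbm z, f (sbm.X i₁ i₂ ω) ∂ℙ)
        * ((∫ ω in Az sbm z, g (sbm.X i₁ i₃ ω) ∂ℙ)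
          * (∫ ω in Az sbm z, h (sbm.X i₃ i₄ ω) ∂ℙ)) := by
  classical
  haveI := sbm.prob
  set T : Ω → ℝ × ℝ × ℝ := fun ω => (sbm.X i₁ i₂ ω, sbm.X i₁ i₃ ω, sbm.X i₃ i₄ ω) with hT
  have hTm : Measurable T :=
    (sbm.X_meas i₁ i₂).prodMk ((sbm.X_meas i₁ i₃).prodMk (sbm.X_meas i₃ i₄))
  set ν := (ℙ.restrict (Az sbm z)).map T with hν
  set μ1 := (ℙ.restrict (Az sbm z)).map (sbm.X i₁ i₂) with hμ1
  set μ2 := (ℙ.restrict (Az sbm z)).map (sbm.X i₁ i₃) with hμ2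
  set μ3 := (ℙ.restrict (Az sbm z)).map (sbm.X i₃ i₄) with hμ3
  haveI := map_finite sbm (Az sbm z) hTm
  haveI := map_finite sbm (Az sbm z) (sbm.X_meas i₁ i₂)
  haveI := map_finite sbm (Az sbm z) (sbm.X_meas i₁ i₃)
  haveI := map_finite sbm (Az sbm z) (sbm.X_meas i₃ i₄)
  haveI := smul_finite ν (Pz sbm z ^ 2)
  have hkey : (ENNReal.ofReal (Pz sbm z ^ 2)) • ν = μ1.prod (μ2.prod μ3) := by
    apply ext_R3
    · intro a b c
      have hpre : T ⁻¹' (Set.Iic a ×ˢ Set.Iic b ×ˢ Set.Iic c)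
          = {ω | sbm.X i₁ i₂ ω ≤ a ∧ sbm.X i₁ i₃ ω ≤ b ∧ sbm.X i₃ i₄ ω ≤ c} := by
        ext ω
        simp [hT, Set.mem_prod]
      rw [Measure.smul_apply, smul_eq_mul, hν,
        Measure.map_apply hTm (measurableSet_Iic.prod (measurableSet_Iic.prod
          measurableSet_Iic)),
        Measure.restrict_apply (hTm (measurableSet_Iic.prod (measurableSet_Iic.prod
          measurableSet_Iic))),
        hpre, triple_cdf sbm h12 h13 h14 h23 h24 h34 z a b c,
        Measure.prod_prod, Measure.prod_prod, hμ1, hμ2, hμ3,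
        Measure.map_apply (sbm.X_meas i₁ i₂) measurableSet_Iic,
        Measure.map_apply (sbm.X_meas i₁ i₃) measurableSet_Iic,
        Measure.map_apply (sbm.X_meas i₃ i₄) measurableSet_Iic,
        Measure.restrict_apply ((sbm.X_meas i₁ i₂) measurableSet_Iic),
        Measure.restrict_apply ((sbm.X_meas i₁ i₃) measurableSet_Iic),
        Measure.restrict_apply ((sbm.X_meas i₃ i₄) measurableSet_Iic),
        preimage_Iic, preimage_Iic, preimage_Iic,
        single_cdf sbm h12 z a, single_cdf sbm h13 z b, single_cdf sbm h34 z c]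
      rw [sq, ENNReal.ofReal_mul (Pz_pos sbm z).le]
      ring
    · have hL : (ENNReal.ofReal (Pz sbm z ^ 2) • ν) Set.univ
          = ENNReal.ofReal (Pz sbm z ^ 2) * ENNReal.ofReal (Pz sbm z) := by
        rw [Measure.smul_apply, smul_eq_mul, hν, Measure.map_apply hTm MeasurableSet.univ,
          Set.preimage_univ, Measure.restrict_apply_univ, measure_Az]
      have hm1 : μ1 Set.univ = ENNReal.ofReal (Pz sbm z) := by
        rw [hμ1, Measure.map_apply (sbm.X_meas i₁ i₂) MeasurableSet.univ,
          Set.preimage_univ, Measure.restrict_apply_univ, measure_Az]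
      have hm2 : μ2 Set.univ = ENNReal.ofReal (Pz sbm z) := by
        rw [hμ2, Measure.map_apply (sbm.X_meas i₁ i₃) MeasurableSet.univ,
          Set.preimage_univ, Measure.restrict_apply_univ, measure_Az]
      have hm3 : μ3 Set.univ = ENNReal.ofReal (Pz sbm z) := by
        rw [hμ3, Measure.map_apply (sbm.X_meas i₃ i₄) MeasurableSet.univ,
          Set.preimage_univ, Measure.restrict_apply_univ, measure_Az]
      have hR : (μ1.prod (μ2.prod μ3)) Set.univ
          = ENNReal.ofReal (Pz sbm z) * (ENNReal.ofReal (Pz sbm z)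
            * ENNReal.ofReal (Pz sbm z)) := by
        have hs : (Set.univ : Set (ℝ × ℝ × ℝ))
            = (Set.univ ×ˢ (Set.univ ×ˢ Set.univ)) := by simp
        rw [hs, Measure.prod_prod, Measure.prod_prod, hm1, hm2, hm3]
      rw [hL, hR, sq, ENNReal.ofReal_mul (Pz_pos sbm z).le]
      ring
  have hFm : Measurable (fun u : ℝ × ℝ × ℝ => f u.1 * (g u.2.1 * h u.2.2)) :=
    (hf.comp measurable_fst).mul
      ((hg.comp (measurable_fst.comp measurable_snd)).mul
        (hh.comp (measurable_snd.comp measurable_snd)))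
  have hI := congrArg (fun m => ∫ u : ℝ × ℝ × ℝ, f u.1 * (g u.2.1 * h u.2.2) ∂m) hkey
  simp only [integral_smul_measure] at hI
  rw [ENNReal.toReal_ofReal (sq_nonneg _)] at hI
  rw [hν, integral_map hTm.aemeasurable hFm.aestronglyMeasurable] at hI
  rw [integral_prod_mul f (fun v : ℝ × ℝ => g v.1 * h v.2)] at hI
  rw [integral_prod_mul g h] at hI
  rw [hμ1, hμ2, hμ3,
    integral_map (sbm.X_meas i₁ i₂).aemeasurable hf.aestronglyMeasurable,
    integral_map (sbm.X_meas i₁ i₃).aemeasurable hg.aestronglyMeasurable,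
    integral_map (sbm.X_meas i₃ i₄).aemeasurable hh.aestronglyMeasurable] at hI
  simpa [hT] using hI

end SBMAux

namespace SBMAux
variable {Ω : Type} [MeasurableSpace Ω] {ℙ : MeasureTheory.Measure Ω} {n r : ℕ}
open MeasureTheory Set

lemma sum_label (sbm : SBM Ω ℙ n r) {i₁ i₂ i₃ i₄ : Fin n}
    (h12 : i₁ ≠ i₂) (h13 : i₁ ≠ i₃) (h14 : i₁ ≠ i₄)
    (h23 : i₂ ≠ i₃) (h24 : i₂ ≠ i₄) (h34 : i₃ ≠ i₄)
    (g : Fin r → Fin r → Fin r → Fin r → ℝ) :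
    ∑ z : Fin n → Fin r, Pz sbm z * g (z i₁) (z i₂) (z i₃) (z i₄)
      = ∑ q₁ : Fin r, ∑ q₂ : Fin r, ∑ q₃ : Fin r, ∑ q₄ : Fin r,
          (sbm.p q₁ * sbm.p q₂ * sbm.p q₃ * sbm.p q₄) * g q₁ q₂ q₃ q₄ := by
  classical
  have key := Finset.sum_fiberwise_eq_sum_filter Finset.univ Finset.univ
    (fun z : Fin n → Fin r => ((z i₁, z i₂), (z i₃, z i₄)))
    (fun z => Pz sbm z * g (z i₁) (z i₂) (z i₃) (z i₄))
  simp only [Finset.mem_univ, Finset.filter_true] at key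
  rw [← key, Fintype.sum_prod_type]
  rw [Fintype.sum_prod_type]
  refine Finset.sum_congr rfl fun q₁ _ => ?_
  refine Finset.sum_congr rfl fun q₂ _ => ?_
  rw [Fintype.sum_prod_type]
  refine Finset.sum_congr rfl fun q₃ _ => ?_
  refine Finset.sum_congr rfl fun q₄ _ => ?_
  have hfix : ∀ z ∈ Finset.filter
      (fun z : Fin n → Fin r => ((z i₁, z i₂), (z i₃, z i₄)) = ((q₁, q₂), (q₃, q₄)))
      Finset.univ,
      Pz sbm z * g (z i₁) (z i₂) (z i₃) (z i₄) = Pz sbm z * g q₁ q₂ q₃ q₄ := by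
    intro z hz
    rw [Finset.mem_filter] at hz
    have h := hz.2
    simp only [Prod.mk.injEq] at h
    obtain ⟨⟨e1, e2⟩, e3, e4⟩ := h
    rw [e1, e2, e3, e4]
  rw [Finset.sum_congr rfl hfix, ← Finset.sum_mul]
  congr 1
  -- the fiber weight
  set qf : Fin n → Fin r := fun k =>
    if k = i₁ then q₁ else if k = i₂ then q₂ else if k = i₃ then q₃ else q₄ with hqf
  have hq1 : qf i₁ = q₁ := by simp [hqf]
  have hq2 : qf i₂ = q₂ := by simp [hqf, h12.symm]
  have hq3 : qf i₃ = q₃ := by simp [hqf, h13.symm, h23.symm]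
  have hq4 : qf i₄ = q₄ := by simp [hqf, h14.symm, h24.symm, h34.symm]
  have hcond : ∀ z : Fin n → Fin r,
      (((z i₁, z i₂), (z i₃, z i₄)) = ((q₁, q₂), (q₃, q₄)))
        ↔ (∀ k ∈ ({i₁, i₂, i₃, i₄} : Finset (Fin n)), z k = qf k) := by
    intro z
    simp only [Prod.mk.injEq, Finset.mem_insert, Finset.mem_singleton]
    constructor
    · rintro ⟨⟨e1, e2⟩, e3, e4⟩ k hk
      rcases hk with rfl | rfl | rfl | rfl
      · rw [e1, hq1]
      · rw [e2, hq2]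
      · rw [e3, hq3]
      · rw [e4, hq4]
    · intro h
      refine ⟨⟨?_, ?_⟩, ?_, ?_⟩
      · rw [h i₁ (Or.inl rfl), hq1]
      · rw [h i₂ (Or.inr (Or.inl rfl)), hq2]
      · rw [h i₃ (Or.inr (Or.inr (Or.inl rfl))), hq3]
      · rw [h i₄ (Or.inr (Or.inr (Or.inr rfl))), hq4]
  have := sum_prod_p_filter sbm {i₁, i₂, i₃, i₄} qf
  rw [Finset.sum_filter]
  calc ∑ z : Fin n → Fin r,
        (if ((z i₁, z i₂), (z i₃, z i₄)) = ((q₁, q₂), (q₃, q₄)) then Pz sbm z else 0)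
      = ∑ z : Fin n → Fin r,
        (if ∀ k ∈ ({i₁, i₂, i₃, i₄} : Finset (Fin n)), z k = qf k
          then ∏ k, sbm.p (z k) else 0) := by
        refine Finset.sum_congr rfl fun z _ => ?_
        rw [Pz_def]
        exact if_congr (hcond z) rfl rfl
    _ = ∏ k ∈ ({i₁, i₂, i₃, i₄} : Finset (Fin n)), sbm.p (qf k) := this
    _ = sbm.p q₁ * sbm.p q₂ * sbm.p q₃ * sbm.p q₄ := by
        rw [Finset.prod_insert (by simp [h12, h13, h14]),
          Finset.prod_insert (by simp [h23, h24]),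
          Finset.prod_insert (by simp [h34]), Finset.prod_singleton,
          hq1, hq2, hq3, hq4]
        ring

end SBMAux

open SBMAux

/-- Under the weighted stochastic block model, the path-graph moment
matrix factors multilinearly: for distinct nodes `i₁, i₂, i₃, i₄` and all `l₁ l₂`,
`E(α_{l₁}(X_{i₁,i₂}) φ(X_{i₁,i₃}) α_{l₂}(X_{i₃,i₄})) = (G * H_φ * Gᵀ) l₁ l₂`,
where `(G) l' z = E(α_{l'}(X_{i,j}) | Z i = z)` and
`(H_φ) z₁ z₂ = p z₁ * p z₂ * E(φ(X_{i,j}) | Z i = z₁, Z j = z₂)`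
(conditional expectations given an event are written as restricted integrals divided by
the probability of the event). -/
theorem path_graph_moment_factorization
    {Ω : Type} [MeasurableSpace Ω] {ℙ : Measure Ω} {n r l : ℕ}
    (sbm : SBM Ω ℙ n r) (hn : 4 ≤ n)
    (α : Fin l → ℝ → ℝ)
    (hα_meas : ∀ l', Measurable (α l'))
    (hα_bdd : ∀ l', ∃ C, ∀ u, |α l' u| ≤ C)
    (φ : ℝ → ℝ) (hφ_meas : Measurable φ)
    (hφ_int : ∀ i j, i ≠ j → Integrable (fun ω => φ (sbm.X i j ω)) ℙ)
    (G : Matrix (Fin l) (Fin r) ℝ)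
    (hG : ∀ i j, i ≠ j → ∀ l' z,
      G l' z = (∫ ω in {ω | sbm.Z i ω = z}, α l' (sbm.X i j ω) ∂ℙ)
                  / (ℙ {ω | sbm.Z i ω = z}).toReal)
    (Hφ : Matrix (Fin r) (Fin r) ℝ)
    (hHφ : ∀ i j, i ≠ j → ∀ z₁ z₂,
      Hφ z₁ z₂ = sbm.p z₁ * sbm.p z₂ *
        ((∫ ω in {ω | sbm.Z i ω = z₁ ∧ sbm.Z j ω = z₂}, φ (sbm.X i j ω) ∂ℙ)
          / (ℙ {ω | sbm.Z i ω = z₁ ∧ sbm.Z j ω = z₂}).toReal))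
    (i₁ i₂ i₃ i₄ : Fin n)
    (h12 : i₁ ≠ i₂) (h13 : i₁ ≠ i₃) (h14 : i₁ ≠ i₄)
    (h23 : i₂ ≠ i₃) (h24 : i₂ ≠ i₄) (h34 : i₃ ≠ i₄)
    (l₁ l₂ : Fin l) :
    ∫ ω, α l₁ (sbm.X i₁ i₂ ω) * φ (sbm.X i₁ i₃ ω) * α l₂ (sbm.X i₃ i₄ ω) ∂ℙ
      = (G * Hφ * G.transpose) l₁ l₂ := by
  classical
  haveI := sbm.prob
  have hppos : ∀ q : Fin r, (0:ℝ) < sbm.p q := sbm.p_pos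
  have hpne : ∀ q : Fin r, sbm.p q ≠ 0 := fun q => (hppos q).ne'
  -- integrability of the bounded factors
  have hαint : ∀ (l' : Fin l) (i j : Fin n), Integrable (fun ω => α l' (sbm.X i j ω)) ℙ := by
    intro l' i j
    obtain ⟨C, hC⟩ := hα_bdd l'
    refine Integrable.mono' (integrable_const C)
      (((hα_meas l').comp (sbm.X_meas i j)).aestronglyMeasurable) ?_
    exact Filter.Eventually.of_forall fun ω => by
      simpa [Real.norm_eq_abs] using hC (sbm.X i j ω)
  -- integrability of the product
  have hint : Integrable
      (fun ω => α l₁ (sbm.X i₁ i₂ ω) * φ (sbm.X i₁ i₃ ω) * α l₂ (sbm.X i₃ i₄ ω)) ℙ := by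
    obtain ⟨C1, hC1⟩ := hα_bdd l₁
    obtain ⟨C2, hC2⟩ := hα_bdd l₂
    have h1 : Integrable (fun ω => α l₁ (sbm.X i₁ i₂ ω) * φ (sbm.X i₁ i₃ ω)) ℙ :=
      (hφ_int i₁ i₃ h13).bdd_mul
        (((hα_meas l₁).comp (sbm.X_meas i₁ i₂)).aestronglyMeasurable)
        (c := C1) (ae_of_all _ fun ω => by simpa [Real.norm_eq_abs] using hC1 (sbm.X i₁ i₂ ω))
    have h2 : Integrable
        (fun ω => α l₂ (sbm.X i₃ i₄ ω) * (α l₁ (sbm.X i₁ i₂ ω) * φ (sbm.X i₁ i₃ ω))) ℙ :=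
      h1.bdd_mul (((hα_meas l₂).comp (sbm.X_meas i₃ i₄)).aestronglyMeasurable)
        (c := C2) (ae_of_all _ fun ω => by simpa [Real.norm_eq_abs] using hC2 (sbm.X i₃ i₄ ω))
    have heq : (fun ω => α l₁ (sbm.X i₁ i₂ ω) * φ (sbm.X i₁ i₃ ω) * α l₂ (sbm.X i₃ i₄ ω))
        = fun ω => α l₂ (sbm.X i₃ i₄ ω) * (α l₁ (sbm.X i₁ i₂ ω) * φ (sbm.X i₁ i₃ ω)) := by
      funext ω; ring
    rw [heq]
    exact h2
  -- conditional integrals over pair events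
  set If : Fin r → Fin r → ℝ :=
    fun a b => ∫ ω in Bset sbm i₁ i₂ a b, α l₁ (sbm.X i₁ i₂ ω) ∂ℙ with hIf
  set Ig : Fin r → Fin r → ℝ :=
    fun a b => ∫ ω in Bset sbm i₁ i₃ a b, φ (sbm.X i₁ i₃ ω) ∂ℙ with hIg
  set Ih : Fin r → Fin r → ℝ :=
    fun a b => ∫ ω in Bset sbm i₃ i₄ a b, α l₂ (sbm.X i₃ i₄ ω) ∂ℙ with hIh
  -- G in terms of If / Ih
  have hsplit : ∀ (i j : Fin n) (q₁ : Fin r),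
      {ω | sbm.Z i ω = q₁} = ⋃ q₂ ∈ (Finset.univ : Finset (Fin r)), Bset sbm i j q₁ q₂ := by
    intro i j q₁
    ext ω
    simp only [Set.mem_setOf_eq, Set.mem_iUnion, Finset.mem_univ, Set.iUnion_true]
    constructor
    · intro h; exact ⟨sbm.Z j ω, h, rfl⟩
    · rintro ⟨q₂, hq, -⟩; exact hq
  have hBdisj : ∀ (i j : Fin n) (q₁ : Fin r),
      Set.PairwiseDisjoint (↑(Finset.univ : Finset (Fin r))) (Bset sbm i j q₁) := by
    intro i j q₁ a _ b _ hab
    refine Set.disjoint_left.2 fun ω hω hω' => hab ?_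
    exact hω.2.symm.trans hω'.2
  have hsum_int : ∀ (i j : Fin n) (q₁ : Fin r) (f : ℝ → ℝ),
      Integrable (fun ω => f (sbm.X i j ω)) ℙ →
      ∫ ω in {ω | sbm.Z i ω = q₁}, f (sbm.X i j ω) ∂ℙ
        = ∑ q₂ : Fin r, ∫ ω in Bset sbm i j q₁ q₂, f (sbm.X i j ω) ∂ℙ := by
    intro i j q₁ f hf
    rw [hsplit i j q₁, integral_biUnion_finset]
    · exact fun q _ => Bset_meas sbm i j q₁ q
    · exact hBdisj i j q₁
    · exact fun q _ => hf.integrableOn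
  have hG1 : ∀ q₁ : Fin r, ∑ q₂ : Fin r, If q₁ q₂ = G l₁ q₁ * sbm.p q₁ := by
    intro q₁
    rw [hG i₁ i₂ h12 l₁ q₁, measure_single sbm i₁ q₁,
      ENNReal.toReal_ofReal (hppos q₁).le,
      hsum_int i₁ i₂ q₁ (α l₁) (hαint l₁ i₁ i₂), div_mul_cancel₀ _ (hpne q₁), hIf]
  have hG2 : ∀ q₃ : Fin r, ∑ q₄ : Fin r, Ih q₃ q₄ = G l₂ q₃ * sbm.p q₃ := by
    intro q₃
    rw [hG i₃ i₄ h34 l₂ q₃, measure_single sbm i₃ q₃,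
      ENNReal.toReal_ofReal (hppos q₃).le,
      hsum_int i₃ i₄ q₃ (α l₂) (hαint l₂ i₃ i₄), div_mul_cancel₀ _ (hpne q₃), hIh]
  have hH : ∀ q₁ q₃ : Fin r, Hφ q₁ q₃ = Ig q₁ q₃ := by
    intro q₁ q₃
    rw [hHφ i₁ i₃ h13 q₁ q₃]
    have : ℙ {ω | sbm.Z i₁ ω = q₁ ∧ sbm.Z i₃ ω = q₃}
        = ENNReal.ofReal (sbm.p q₁ * sbm.p q₃) := measure_B sbm h13 q₁ q₃
    rw [this, ENNReal.toReal_ofReal (mul_nonneg (hppos q₁).le (hppos q₃).le),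
      mul_comm (sbm.p q₁ * sbm.p q₃), div_mul_cancel₀ _ (mul_ne_zero (hpne q₁) (hpne q₃)),
      hIg]
    rfl
  -- the per-tuple weight
  set gq : Fin r → Fin r → Fin r → Fin r → ℝ := fun q₁ q₂ q₃ q₄ =>
    If q₁ q₂ / (sbm.p q₁ * sbm.p q₂) * (Ig q₁ q₃ / (sbm.p q₁ * sbm.p q₃))
      * (Ih q₃ q₄ / (sbm.p q₃ * sbm.p q₄)) with hgq
  -- decompose the integral over the label partition
  rw [integral_partition sbm _ hint]
  have hz : ∀ z : Fin n → Fin r,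
      ∫ ω in Az sbm z, α l₁ (sbm.X i₁ i₂ ω) * φ (sbm.X i₁ i₃ ω) * α l₂ (sbm.X i₃ i₄ ω) ∂ℙ
        = Pz sbm z * gq (z i₁) (z i₂) (z i₃) (z i₄) := by
    intro z
    have e1 := factorization sbm h12 h13 h14 h23 h24 h34 z (α l₁) φ (α l₂)
      (hα_meas l₁) hφ_meas (hα_meas l₂)
    have e2 := scaling sbm h12 z (α l₁) (hα_meas l₁)
    have e3 := scaling sbm h13 z φ hφ_meas
    have e4 := scaling sbm h34 z (α l₂) (hα_meas l₂)
    have hA : ∫ ω in Az sbm z, α l₁ (sbm.X i₁ i₂ ω) ∂ℙ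
        = Pz sbm z * If (z i₁) (z i₂) / (sbm.p (z i₁) * sbm.p (z i₂)) := by
      rw [eq_div_iff (mul_ne_zero (hpne _) (hpne _))]
      rw [hIf]
      linarith [e2]
    have hB : ∫ ω in Az sbm z, φ (sbm.X i₁ i₃ ω) ∂ℙ
        = Pz sbm z * Ig (z i₁) (z i₃) / (sbm.p (z i₁) * sbm.p (z i₃)) := by
      rw [eq_div_iff (mul_ne_zero (hpne _) (hpne _))]
      rw [hIg]
      linarith [e3]
    have hC : ∫ ω in Az sbm z, α l₂ (sbm.X i₃ i₄ ω) ∂ℙ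
        = Pz sbm z * Ih (z i₃) (z i₄) / (sbm.p (z i₃) * sbm.p (z i₄)) := by
      rw [eq_div_iff (mul_ne_zero (hpne _) (hpne _))]
      rw [hIh]
      linarith [e4]
    have hintg : (fun ω => α l₁ (sbm.X i₁ i₂ ω) * φ (sbm.X i₁ i₃ ω) * α l₂ (sbm.X i₃ i₄ ω))
        = fun ω => α l₁ (sbm.X i₁ i₂ ω) * (φ (sbm.X i₁ i₃ ω) * α l₂ (sbm.X i₃ i₄ ω)) := by
      funext ω; ring
    apply mul_left_cancel₀ (pow_ne_zero 2 (Pz_pos sbm z).ne')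
    rw [hintg, e1, hA, hB, hC, hgq]
    field_simp [hpne (z i₁), hpne (z i₂), hpne (z i₃), hpne (z i₄), (Pz_pos sbm z).ne']
  rw [Finset.sum_congr rfl fun z _ => hz z,
    sum_label sbm h12 h13 h14 h23 h24 h34 gq]
  -- now pure algebra on the finite sums
  have hterm : ∀ q₁ q₂ q₃ q₄ : Fin r,
      (sbm.p q₁ * sbm.p q₂ * sbm.p q₃ * sbm.p q₄) * gq q₁ q₂ q₃ q₄
        = If q₁ q₂ * Ig q₁ q₃ * Ih q₃ q₄ / (sbm.p q₁ * sbm.p q₃) := by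
    intro q₁ q₂ q₃ q₄
    rw [hgq]
    field_simp [hpne q₁, hpne q₂, hpne q₃, hpne q₄]
  have hmatrix : (G * Hφ * G.transpose) l₁ l₂
      = ∑ q₁ : Fin r, ∑ q₃ : Fin r, G l₁ q₁ * Hφ q₁ q₃ * G l₂ q₃ := by
    simp only [Matrix.mul_apply, Matrix.transpose_apply, Finset.sum_mul]
    rw [Finset.sum_comm]
  rw [hmatrix]
  refine Finset.sum_congr rfl fun q₁ _ => ?_
  rw [Finset.sum_comm]
  refine Finset.sum_congr rfl fun q₃ _ => ?_
  calc ∑ q₂ : Fin r, ∑ q₄ : Fin r,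
        (sbm.p q₁ * sbm.p q₂ * sbm.p q₃ * sbm.p q₄) * gq q₁ q₂ q₃ q₄
      = ∑ q₂ : Fin r, ∑ q₄ : Fin r,
        If q₁ q₂ * Ig q₁ q₃ * Ih q₃ q₄ / (sbm.p q₁ * sbm.p q₃) := by
        exact Finset.sum_congr rfl fun q₂ _ => Finset.sum_congr rfl fun q₄ _ =>
          hterm q₁ q₂ q₃ q₄
    _ = (∑ q₂ : Fin r, If q₁ q₂) * Ig q₁ q₃ * (∑ q₄ : Fin r, Ih q₃ q₄)
          / (sbm.p q₁ * sbm.p q₃) := by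
        rw [Finset.sum_mul, Finset.sum_mul, Finset.sum_div]
        refine Finset.sum_congr rfl fun q₂ _ => ?_
        rw [Finset.mul_sum, Finset.sum_div]
    _ = G l₁ q₁ * Hφ q₁ q₃ * G l₂ q₃ := by
        rw [hG1 q₁, hG2 q₃, hH q₁ q₃]
        field_simp [hpne q₁, hpne q₃]
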